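/- Let α₋₁, α₀, α₁, α₂, σ > 0 and κ, ρ > 1 with κ + 1 = 2ρ and α₂/σ² > (κ + 1)/(2√2), and let f(x) = α₋₁x⁻¹ − α₀ + α₁x − α₂x^κ for x > 0. Then there exist constants ϱ ∈ (1, ∞) with α₂² > (ϱ/2)ρ²σ⁴ and C ∈ [0, ∞) such that for all x, y > 0: (ϱ/2)·ρ²σ⁴·(x^κ − y^κ)² ≤ (f(x) − f(y))² + C (x − y)². -/

import Mathlib

set_option maxHeartbeats 1000000


/-- Monotonicity condition component involving the Milstein term for the Ait-Sahalia
model in the critical regime κ + 1 = 2ρ, under α₂/σ² > (κ+1)/(2√2). -/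
theorem stmt_11 (αm1 α₀ α₁ α₂ σ κ ρ : ℝ)
    (hm1 : 0 < αm1) (h₀ : 0 < α₀) (h₁ : 0 < α₁) (h₂ : 0 < α₂) (hσ : 0 < σ)
    (hκ : 1 < κ) (hρ : 1 < ρ) (hcrit : κ + 1 = 2 * ρ)
    (hpar : α₂ / σ^2 > (κ + 1) / (2 * Real.sqrt 2)) :
    ∃ ϱ : ℝ, 1 < ϱ ∧ α₂^2 > (ϱ / 2) * ρ^2 * σ^4 ∧ ∃ C : ℝ, 0 ≤ C ∧
      ∀ x y : ℝ, 0 < x → 0 < y →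
        (ϱ / 2) * ρ^2 * σ^4 * (x ^ κ - y ^ κ)^2
          ≤ ((αm1 * x⁻¹ - α₀ + α₁ * x - α₂ * x ^ κ)
              - (αm1 * y⁻¹ - α₀ + α₁ * y - α₂ * y ^ κ))^2
            + C * (x - y)^2 := by
  have hσ2 : 0 < σ ^ 2 := by positivity
  have hρσ : 0 < ρ ^ 2 * σ ^ 4 := by positivity
  have hs2 : Real.sqrt 2 ^ 2 = 2 := Real.sq_sqrt (by norm_num)
  have hs2pos : 0 < Real.sqrt 2 := Real.sqrt_pos.mpr (by norm_num)
  -- From the parameter assumption: ρ²σ⁴ < 2α₂²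
  have hM : ρ ^ 2 * σ ^ 4 < 2 * α₂ ^ 2 := by
    have h1 : (κ + 1) * σ ^ 2 < α₂ * (2 * Real.sqrt 2) := by
      have := (div_lt_div_iff₀ (by positivity) hσ2).mp hpar
      linarith
    have h2 : ρ * σ ^ 2 < Real.sqrt 2 * α₂ := by nlinarith
    have hρσ2 : 0 < ρ * σ ^ 2 := by positivity
    nlinarith [sq_nonneg (Real.sqrt 2 * α₂ - ρ * σ ^ 2)]
  refine ⟨1 / 2 + α₂ ^ 2 / (ρ ^ 2 * σ ^ 4), ?_, ?_, ?_⟩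
  · have : 1 / 2 < α₂ ^ 2 / (ρ ^ 2 * σ ^ 4) := by
      rw [div_lt_div_iff₀ (by norm_num) hρσ]; linarith
    linarith
  · rw [gt_iff_lt, div_mul_eq_mul_div, div_mul_eq_mul_div, div_lt_iff₀ (by norm_num : (0:ℝ) < 2)]
    have : (1 / 2 + α₂ ^ 2 / (ρ ^ 2 * σ ^ 4)) * ρ ^ 2 * σ ^ 4
        = ρ ^ 2 * σ ^ 4 / 2 + α₂ ^ 2 := by field_simp
    rw [this]; linarith
  set ϱ : ℝ := 1 / 2 + α₂ ^ 2 / (ρ ^ 2 * σ ^ 4) with hϱdef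
  set ε : ℝ := α₂ ^ 2 - ϱ / 2 * ρ ^ 2 * σ ^ 4 with hεdef
  have hε : 0 < ε := by
    have : ϱ / 2 * ρ ^ 2 * σ ^ 4 = ρ ^ 2 * σ ^ 4 / 4 + α₂ ^ 2 / 2 := by
      rw [hϱdef]; field_simp; ring
    rw [hεdef, this]; linarith
  refine ⟨(α₂ * α₁) ^ 2 / ε, by positivity, ?_⟩
  intro x y hx hy
  set C : ℝ := (α₂ * α₁) ^ 2 / ε with hCdef
  have hκ0 : (0:ℝ) ≤ κ := by linarith
  have hu : 0 ≤ (x - y) * (x ^ κ - y ^ κ) := by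
    rcases le_total x y with h | h
    · nlinarith [Real.rpow_le_rpow hx.le h hκ0]
    · exact mul_nonneg (by linarith)
        (by linarith [Real.rpow_le_rpow hy.le h hκ0])
  have hcross : (x⁻¹ - y⁻¹) * (x ^ κ - y ^ κ) ≤ 0 := by
    have hxy : 0 < x * y := mul_pos hx hy
    have heq : (x⁻¹ - y⁻¹) * (x ^ κ - y ^ κ)
        = -(((x - y) * (x ^ κ - y ^ κ)) / (x * y)) := by
      field_simp; ring
    rw [heq]
    exact neg_nonpos.mpr (div_nonneg hu hxy.le)
  have hq : 0 ≤ ε * (x ^ κ - y ^ κ) ^ 2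
      - 2 * (α₂ * α₁) * ((x - y) * (x ^ κ - y ^ κ)) + C * (x - y) ^ 2 := by
    have h2 : 0 ≤ (ε * (x ^ κ - y ^ κ) - α₂ * α₁ * (x - y)) ^ 2 / ε :=
      div_nonneg (sq_nonneg _) hε.le
    have heq : (ε * (x ^ κ - y ^ κ) - α₂ * α₁ * (x - y)) ^ 2 / ε
        = ε * (x ^ κ - y ^ κ) ^ 2
          - 2 * (α₂ * α₁) * ((x - y) * (x ^ κ - y ^ κ)) + C * (x - y) ^ 2 := by
      rw [hCdef]; field_simp; ring
    rwa [heq] at h2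
  have hεdef' : ϱ / 2 * ρ ^ 2 * σ ^ 4 = α₂ ^ 2 - ε := by rw [hεdef]; ring
  rw [hεdef']
  clear_value C ε ϱ
  have t1 := sq_nonneg (αm1 * (x⁻¹ - y⁻¹) + α₁ * (x - y))
  have t2 : 0 ≤ (2 * α₂ * αm1) * (-((x⁻¹ - y⁻¹) * (x ^ κ - y ^ κ))) :=
    mul_nonneg (by positivity) (neg_nonneg.mpr hcross)
  have key : ((αm1 * x⁻¹ - α₀ + α₁ * x - α₂ * x ^ κ)
        - (αm1 * y⁻¹ - α₀ + α₁ * y - α₂ * y ^ κ)) ^ 2 + C * (x - y) ^ 2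
      - (α₂ ^ 2 - ε) * (x ^ κ - y ^ κ) ^ 2
      = (αm1 * (x⁻¹ - y⁻¹) + α₁ * (x - y)) ^ 2
        + (2 * α₂ * αm1) * (-((x⁻¹ - y⁻¹) * (x ^ κ - y ^ κ)))
        + (ε * (x ^ κ - y ^ κ) ^ 2
          - 2 * (α₂ * α₁) * ((x - y) * (x ^ κ - y ^ κ)) + C * (x - y) ^ 2) := by
    ring
  linarith [t1, t2, hq, key.ge, key.le]
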